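/- Let G be a finite group whose order is a power of 3, such that the abelianization G/G′ is isomorphic to (ℤ/3ℤ) × (ℤ/3ℤ). If every maximal subgroup M of G satisfies |M/M′| = 3, then G is isomorphic to (ℤ/3ℤ) × (ℤ/3ℤ); in particular (ℤ/3ℤ) × (ℤ/3ℤ) is the unique finite 3-group G with G/G′ ≅ (3,3) whose four maximal subgroups all have abelianization of order 3. -/

import Mathlib

open Subgroup

section Aux

variable {G : Type*} [Group G] [Finite G]

lemma aux_normal (hG : IsPGroup 3 G) {M : Subgroup G} (hM : IsCoatom M) : M.Normal := by
  have : Fact (Nat.Prime 3) := ⟨by norm_num⟩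
  have : Group.IsNilpotent G := hG.isNilpotent
  exact Subgroup.NormalizerCondition.normal_of_coatom M normalizerCondition_of_isNilpotent hM

lemma aux_quot_trivial {M : Subgroup G} [M.Normal] (hM : IsCoatom M)
    (K : Subgroup (G ⧸ M)) : K = ⊥ ∨ K = ⊤ := by
  have hsurj : Function.Surjective (QuotientGroup.mk' M) := QuotientGroup.mk'_surjective M
  have hker : (QuotientGroup.mk' M).ker = M := QuotientGroup.ker_mk' M
  have hmc : Subgroup.map (QuotientGroup.mk' M) (Subgroup.comap (QuotientGroup.mk' M) K) = K :=
    Subgroup.map_comap_eq_self_of_surjective hsurj K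
  have hle : M ≤ Subgroup.comap (QuotientGroup.mk' M) K := by
    intro m hm
    have : QuotientGroup.mk' M m = 1 := by
      rw [← MonoidHom.mem_ker, hker]; exact hm
    show (QuotientGroup.mk' M) m ∈ K
    rw [this]; exact K.one_mem
  rcases eq_or_lt_of_le hle with h | h
  · left
    rw [← hmc, Subgroup.map_eq_bot_iff, hker, ← h]
  · right
    rw [← hmc, hM.2 _ h, ← MonoidHom.range_eq_map, MonoidHom.range_eq_top]
    exact hsurj

lemma aux_quot_card (hG : IsPGroup 3 G) {M : Subgroup G} [M.Normal] (hM : IsCoatom M) :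
    Nat.card (G ⧸ M) = 3 := by
  have : Fact (Nat.Prime 3) := ⟨by norm_num⟩
  have hQ : IsPGroup 3 (G ⧸ M) := hG.to_quotient M
  have hnt : Nontrivial (G ⧸ M) := by
    obtain ⟨g, hg⟩ : ∃ g : G, g ∉ M := by
      by_contra h
      push_neg at h
      exact hM.1 ((Subgroup.eq_top_iff' M).2 h)
    exact ⟨⟨QuotientGroup.mk g, 1, by
      simpa [QuotientGroup.eq_one_iff] using hg⟩⟩
  obtain ⟨n, hn⟩ := IsPGroup.iff_card.mp hQ
  have hn1 : 1 ≤ n := by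
    by_contra h
    push_neg at h
    interval_cases n
    rw [pow_zero] at hn
    exact (Finite.one_lt_card (α := G ⧸ M)).ne' hn
  have hdvd : 3 ∣ Nat.card (G ⧸ M) := by
    rw [hn]; exact dvd_pow_self 3 (by omega : n ≠ 0)
  obtain ⟨g, hg⟩ := exists_prime_orderOf_dvd_card' 3 hdvd
  have hgne : g ≠ 1 := by
    intro h; rw [h, orderOf_one] at hg; norm_num at hg
  have hzp : Subgroup.zpowers g = ⊤ := by
    rcases aux_quot_trivial hM (Subgroup.zpowers g) with h | h
    · exact absurd (Subgroup.zpowers_eq_bot.mp h) hgne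
    · exact h
  have := Nat.card_zpowers g
  rw [hzp] at this
  rw [← hg, ← this, Subgroup.card_top]

lemma aux_commutator_le (hG : IsPGroup 3 G) {M : Subgroup G} (hM : IsCoatom M) :
    commutator G ≤ M := by
  have : Fact (Nat.Prime 3) := ⟨by norm_num⟩
  have hnorm : M.Normal := aux_normal hG hM
  have hcard : Nat.card (G ⧸ M) = 3 := aux_quot_card hG hM
  have hcyc : IsCyclic (G ⧸ M) := isCyclic_of_prime_card hcard
  letI : CommGroup (G ⧸ M) := IsCyclic.commGroup
  have := Abelianization.commutator_subset_ker (QuotientGroup.mk' M)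
  rwa [QuotientGroup.ker_mk'] at this

lemma aux_commutator_le_frattini (hG : IsPGroup 3 G) : commutator G ≤ frattini G := by
  rw [frattini, Order.radical]
  exact le_iInf₂ fun M hM => aux_commutator_le hG hM

/-- A finite 3-group with cyclic (prime order) abelianization is cyclic. -/
lemma aux_cyclic (hG : IsPGroup 3 G) (h : Nat.card (Abelianization G) = 3) :
    ∃ x : G, Subgroup.zpowers x = ⊤ := by
  have : Fact (Nat.Prime 3) := ⟨by norm_num⟩
  have hcyc : IsCyclic (Abelianization G) := isCyclic_of_prime_card h
  obtain ⟨g, hg⟩ := hcyc.exists_generator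
  obtain ⟨x, hx⟩ : ∃ x : G, Abelianization.of x = g := Quot.exists_rep g
  have hmap : Subgroup.map (Abelianization.of (G := G)) (Subgroup.zpowers x) = ⊤ := by
    rw [eq_top_iff]
    intro a _
    obtain ⟨n, hn⟩ := hg a
    refine ⟨x ^ n, Subgroup.zpow_mem _ (Subgroup.mem_zpowers x) n, ?_⟩
    rw [map_zpow]
    have : Abelianization.of x = g := hx
    rw [this]; exact hn
  have hsup : Subgroup.zpowers x ⊔ (Abelianization.of (G := G)).ker = ⊤ := by
    rw [← Subgroup.comap_map_eq, hmap, Subgroup.comap_top]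
  have hker : (Abelianization.of (G := G)).ker = commutator G := QuotientGroup.ker_mk' _
  have htop : Subgroup.zpowers x ⊔ frattini G = ⊤ := by
    rw [eq_top_iff, ← hsup]
    exact sup_le_sup le_rfl (hker ▸ aux_commutator_le_frattini hG)
  exact ⟨x, frattini_nongenerating htop⟩

end Aux

theorem stmt_19 (G : Type*) [Group G] [Finite G] (hG : IsPGroup 3 G)
    (hab : Nonempty (Abelianization G ≃* Multiplicative (ZMod 3) × Multiplicative (ZMod 3)))
    (hmax : ∀ M : Subgroup G, IsCoatom M → Nat.card (Abelianization ↥M) = 3) :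
    Nonempty (G ≃* Multiplicative (ZMod 3) × Multiplicative (ZMod 3)) := by
  obtain ⟨e⟩ := hab
  have habcard : Nat.card (Abelianization G) = 9 := by
    rw [Nat.card_eq_of_bijective e e.bijective]
    simp [Nat.card_prod]
  -- G is nontrivial
  have hnt : Nontrivial G := by
    rcases subsingleton_or_nontrivial G with h | h
    · have : Nat.card (Abelianization G) = 1 := by
        have : Subsingleton (Abelianization G) := Quotient.instSubsingletonQuotient _
        exact Nat.card_eq_one_iff_unique.mpr ⟨this, ⟨Abelianization.of 1⟩⟩
      omega
    · exact h
  -- find a coatom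
  have hcoatomic : IsCoatomic (Subgroup G) := Finite.to_isCoatomic
  obtain ⟨M, hM, -⟩ := (eq_top_or_exists_le_coatom (⊥ : Subgroup G)).resolve_left
    (by simpa using (Subgroup.bot_ne_top (G := G)))
  have hnorm : M.Normal := aux_normal hG hM
  -- M is cyclic hence abelian, so card M = 3
  have hMp : IsPGroup 3 ↥M := hG.to_subgroup M
  obtain ⟨x, hx⟩ := aux_cyclic hMp (hmax M hM)
  have hMcomm : commutator ↥M = ⊥ := by
    have hc : ∀ a b : ↥M, a * b = b * a := by
      intro a b
      have ha := hx ▸ Subgroup.mem_top a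
      have hb := hx ▸ Subgroup.mem_top b
      obtain ⟨m, hm⟩ := Subgroup.mem_zpowers_iff.mp ha
      obtain ⟨n, hn⟩ := Subgroup.mem_zpowers_iff.mp hb
      rw [← hm, ← hn, ← zpow_add, ← zpow_add, add_comm]
    rw [commutator_def, eq_bot_iff, Subgroup.commutator_le]
    intro g _ h _
    simp [commutatorElement_def, mul_assoc, hc g h, Subgroup.mem_bot]
  have hMcard : Nat.card ↥M = 3 := by
    have h0 := Subgroup.card_eq_card_quotient_mul_card_subgroup (commutator ↥M)
    have h2 : Nat.card ↥(commutator ↥M) = 1 := by rw [hMcomm]; simp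
    have h3 : Nat.card (↥M ⧸ commutator ↥M) = 3 := hmax M hM
    rw [h2, mul_one, h3] at h0
    exact h0
  have hGcard : Nat.card G = 9 := by
    have := Subgroup.card_eq_card_quotient_mul_card_subgroup M
    rw [aux_quot_card hG hM, hMcard] at this
    omega
  -- commutator is trivial
  have hcommG : commutator G = ⊥ := by
    have := Subgroup.card_eq_card_quotient_mul_card_subgroup (commutator G)
    have hq : Nat.card (G ⧸ commutator G) = 9 := habcard
    rw [hGcard, hq] at this
    have : Nat.card ↥(commutator G) = 1 := by omega
    exact Subgroup.eq_bot_of_card_eq _ this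
  have e2 : G ≃* Abelianization G :=
    QuotientGroup.quotientBot.symm.trans (QuotientGroup.quotientMulEquivOfEq hcommG.symm)
  exact ⟨e2.trans e⟩
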